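/- arXiv:2501.00891 — 4 statements merged into one kernel-verified Lean document; each statement's English description precedes it below -/
import Mathlib

section
/- Let a > 0 and b > 0 be real numbers with a*b ≥ 1. If a real number t satisfies t ≥ 2*a*log(a*b), then t ≥ a*log(1 + b*t). -/
/-- Basic arithmetic lemma: for `a, b > 0` with `a * b ≥ 1`, if
`t ≥ 2 * a * log (a * b)` then `t ≥ a * log (1 + b * t)`. -/
theorem stmt_0 (a b t : ℝ) (ha : 0 < a) (hb : 0 < b) (hab : 1 ≤ a * b)
    (ht : t ≥ 2 * a * Real.log (a * b)) :
    t ≥ a * Real.log (1 + b * t) := by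
  set L := Real.log (a * b) with hLdef
  have hab0 : (0:ℝ) < a * b := lt_of_lt_of_le one_pos hab
  have hL0 : 0 ≤ L := Real.log_nonneg hab
  have ht0 : 0 ≤ t := le_trans (by positivity) ht
  have hexpL : Real.exp L = a * b := Real.exp_log hab0
  -- sinh inequality: L ≤ sinh L, i.e. 2*L ≤ (a*b) - 1/(a*b)
  have hsinh : L ≤ Real.sinh L := Real.self_le_sinh_iff.2 hL0
  have hsinh' : 2 * L * (a * b) ≤ (a * b) ^ 2 - 1 := by
    rw [Real.sinh_eq, hexpL, Real.exp_neg, hexpL] at hsinh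
    have h2L : 2 * L ≤ a * b - (a * b)⁻¹ := by linarith
    have hc := mul_le_mul_of_nonneg_right h2L (le_of_lt hab0)
    have hinv : (a * b)⁻¹ * (a * b) = 1 := inv_mul_cancel₀ (ne_of_gt hab0)
    nlinarith [hc, hinv]
  have hs : 2 * L ≤ t / a := by
    rw [le_div_iff₀ ha]; linarith
  have key : 1 + b * t ≤ Real.exp (t / a) := by
    have h1 : 1 + (t / a - 2 * L) ≤ Real.exp (t / a - 2 * L) := by
      linarith [Real.add_one_le_exp (t / a - 2 * L)]
    have h2 : Real.exp (t / a) = (a * b) ^ 2 * Real.exp (t / a - 2 * L) := by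
      rw [← hexpL, sq, ← Real.exp_add, ← Real.exp_add]
      ring_nf
    have h3 : (a * b) ^ 2 * (1 + (t / a - 2 * L)) ≤ (a * b) ^ 2 * Real.exp (t / a - 2 * L) :=
      mul_le_mul_of_nonneg_left h1 (by positivity)
    have hbt : b * t = (a * b) * (t / a) := by field_simp
    rw [h2, hbt]
    nlinarith [hsinh', hs, hab, hL0, mul_le_mul_of_nonneg_left hs (sub_nonneg.2 (one_le_mul_of_one_le_of_one_le hab hab : (1:ℝ) ≤ (a*b)*(a*b)) : (0:ℝ) ≤ (a*b)*(a*b) - 1)]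
  have hpos : (0:ℝ) < 1 + b * t := by positivity
  have hlog : Real.log (1 + b * t) ≤ t / a := by
    rw [Real.log_le_iff_le_exp hpos]; exact key
  calc a * Real.log (1 + b * t) ≤ a * (t / a) := by
        exact mul_le_mul_of_nonneg_left hlog (le_of_lt ha)
    _ = t := by field_simp
end

section
/- Let (x_s)_{s≥1} be an infinite sequence of independent Bernoulli random variables with common mean p, where 0 < p ≤ 1/2. Let δ > 0 and B > 0. Then with probability at least 1 − δ, for every integer t with t ≥ (16/p)·log(1/δ) + 4B/p, one has Σ_{s=1}^{t} x_s ≥ B. -/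
open MeasureTheory ProbabilityTheory
open scoped ENNReal

/-- For an i.i.d. sequence of Bernoulli random variables with mean
`0 < p ≤ 1/2`, with probability at least `1 - δ`, for every
`t ≥ (16/p) * log (1/δ) + 4B/p` one has `∑_{s=1}^t x s ≥ B`. -/
theorem stmt_3 {Ω : Type*} [MeasurableSpace Ω] (μ : Measure Ω)
    [IsProbabilityMeasure μ] (p : ℝ) (hp0 : 0 < p) (hp : p ≤ 1 / 2)
    (x : ℕ → Ω → ℝ) (hmeas : ∀ s, Measurable (x s))
    (hindep : iIndepFun x μ)
    (hval : ∀ s, ∀ᵐ ω ∂μ, x s ω = 0 ∨ x s ω = 1)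
    (hmean : ∀ s, μ {ω | x s ω = 1} = ENNReal.ofReal p)
    (δ B : ℝ) (hδ : 0 < δ) (hB : 0 < B) :
    1 - ENNReal.ofReal δ ≤
      μ {ω | ∀ t : ℕ, (16 / p) * Real.log (1 / δ) + 4 * B / p ≤ (t : ℝ) →
        B ≤ ∑ s ∈ Finset.Icc 1 t, x s ω} := by
  by_cases hδ1 : 1 ≤ δ
  · have h1 : (1 : ℝ≥0∞) ≤ ENNReal.ofReal δ := by
      rw [← ENNReal.ofReal_one]; exact ENNReal.ofReal_le_ofReal hδ1
    rw [tsub_eq_zero_of_le h1]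
    exact zero_le
  push_neg at hδ1
  have hlogδ : 0 ≤ Real.log (1 / δ) := by
    apply Real.log_nonneg
    rw [le_div_iff₀ hδ, one_mul]; linarith
  set T₀ : ℝ := (16 / p) * Real.log (1 / δ) + 4 * B / p with hT₀def
  have hT₀0 : 0 ≤ T₀ := by
    have : 0 ≤ (16 / p) * Real.log (1 / δ) :=
      mul_nonneg (by positivity) hlogδ
    have : 0 ≤ 4 * B / p := by positivity
    unfold T₀; linarith
  set t₀ : ℕ := ⌈T₀⌉₊ with ht₀def
  set S : Ω → ℝ := ∑ s ∈ Finset.Icc 1 t₀, x s with hSdef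
  have hSmeas : Measurable S := by
    have : Measurable fun ω => ∑ s ∈ Finset.Icc 1 t₀, x s ω :=
      Finset.measurable_sum _ fun s _ => hmeas s
    rw [hSdef]
    convert this using 1
    ext ω
    simp [Finset.sum_apply]
  have hGmeas : MeasurableSet {ω | B ≤ S ω} :=
    measurableSet_le measurable_const hSmeas
  have hN : ∀ᵐ ω ∂μ, ∀ s, x s ω = 0 ∨ x s ω = 1 := ae_all_iff.mpr hval
  set c : ℝ := Real.log 2 with hcdef
  have hc0 : 0 ≤ c := Real.log_nonneg (by norm_num)
  have hc1 : c ≤ 1 := by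
    have := Real.log_le_sub_one_of_pos (x := 2) (by norm_num)
    linarith
  -- mgf of each Bernoulli
  have hmgf1 : ∀ s : ℕ, mgf (x s) μ (-c) = 1 - p / 2 := by
    intro s
    have hA : MeasurableSet {ω | x s ω = 1} := (hmeas s) (measurableSet_singleton 1)
    have hxi : x s =ᵐ[μ] Set.indicator {ω | x s ω = 1} (fun _ => (1:ℝ)) := by
      filter_upwards [hval s] with ω hω
      rcases hω with h | h
      · rw [h, Set.indicator_of_notMem]
        simp [Set.mem_setOf_eq, h]
      · rw [h, Set.indicator_of_mem]
        exact h
    have hint : Integrable (x s) μ :=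
      ((integrable_const (1:ℝ)).indicator hA).congr hxi.symm
    have hEx : ∫ ω, x s ω ∂μ = p := by
      rw [integral_congr_ae hxi, integral_indicator_const _ hA, measureReal_def, hmean s,
        smul_eq_mul, mul_one, ENNReal.toReal_ofReal hp0.le]
    have heq : (fun ω => Real.exp (-c * x s ω)) =ᵐ[μ]
        fun ω => 1 + (Real.exp (-c) - 1) * x s ω := by
      filter_upwards [hval s] with ω hω
      rcases hω with h | h <;> simp [h]
    have hexpc : Real.exp (-c) = 1 / 2 := by
      rw [Real.exp_neg, hcdef, Real.exp_log (by norm_num : (0:ℝ) < 2)]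
      norm_num
    rw [mgf, integral_congr_ae heq, integral_add (integrable_const 1) (hint.const_mul _),
      integral_const, integral_const_mul, hEx, hexpc]
    simp [measure_univ]
    ring
  -- integrability of exp(-c * S)
  have hSnn : ∀ᵐ ω ∂μ, 0 ≤ S ω := by
    filter_upwards [hN] with ω hω
    rw [hSdef, Finset.sum_apply]
    apply Finset.sum_nonneg
    intro s _
    rcases hω s with h | h <;> simp [h]
  have hintS : Integrable (fun ω => Real.exp (-c * S ω)) μ := by
    apply Integrable.mono' (integrable_const (1:ℝ))
      ((hSmeas.const_mul (-c)).exp.aestronglyMeasurable)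
    filter_upwards [hSnn] with ω hω
    rw [Real.norm_eq_abs, abs_of_pos (Real.exp_pos _), ← Real.exp_zero]
    apply Real.exp_le_exp.mpr
    nlinarith
  -- Chernoff bound
  have hchern : (μ {ω | S ω ≤ B}).toReal ≤ Real.exp (c * B) * mgf S μ (-c) := by
    have := measure_le_le_exp_mul_mgf (X := S) (μ := μ) (t := -c) B
      (neg_nonpos.mpr hc0) hintS
    simpa [measureReal_def] using this
  have hmgfS : mgf S μ (-c) = (1 - p / 2) ^ t₀ := by
    rw [hSdef, hindep.mgf_sum hmeas]
    rw [Finset.prod_congr rfl fun s _ => hmgf1 s, Finset.prod_const,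
      Nat.card_Icc]
    simp
  have hpow : (1 - p / 2) ^ t₀ ≤ Real.exp (-(p / 2) * t₀) := by
    have h1 : (0:ℝ) ≤ 1 - p / 2 := by linarith
    have h2 : 1 - p / 2 ≤ Real.exp (-(p / 2)) := by
      have := Real.add_one_le_exp (-(p / 2))
      linarith
    calc (1 - p / 2) ^ t₀ ≤ (Real.exp (-(p / 2))) ^ t₀ := by
          exact pow_le_pow_left₀ h1 h2 t₀
      _ = Real.exp (-(p / 2) * t₀) := by
          rw [← Real.exp_nat_mul]; ring_nf
  have hT₀le : T₀ ≤ (t₀ : ℝ) := Nat.le_ceil T₀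
  have hexp_le : Real.exp (c * B) * Real.exp (-(p / 2) * t₀) ≤ δ := by
    rw [← Real.exp_add]
    have hlog : Real.log (1 / δ) = - Real.log δ := by
      rw [one_div, Real.log_inv]
    have hpt : 16 * Real.log (1 / δ) + 4 * B ≤ p * t₀ := by
      have := mul_le_mul_of_nonneg_left hT₀le hp0.le
      rw [hT₀def] at this
      have hpe : p * ((16 / p) * Real.log (1 / δ) + 4 * B / p)
          = 16 * Real.log (1 / δ) + 4 * B := by
        field_simp
      linarith [hpe ▸ this]
    have key : c * B + -(p / 2) * t₀ ≤ Real.log δ := by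
      have hcB : c * B ≤ B := by nlinarith
      nlinarith [hlog ▸ hpt]
    calc Real.exp (c * B + -(p / 2) * t₀) ≤ Real.exp (Real.log δ) :=
          Real.exp_le_exp.mpr key
      _ = δ := Real.exp_log hδ
  have hbound : μ {ω | S ω ≤ B} ≤ ENNReal.ofReal δ := by
    rw [ENNReal.le_ofReal_iff_toReal_le (measure_ne_top μ _) hδ.le]
    calc (μ {ω | S ω ≤ B}).toReal ≤ Real.exp (c * B) * mgf S μ (-c) := hchern
      _ = Real.exp (c * B) * ((1 - p / 2) ^ t₀) := by rw [hmgfS]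
      _ ≤ Real.exp (c * B) * Real.exp (-(p / 2) * t₀) :=
          mul_le_mul_of_nonneg_left hpow (Real.exp_pos _).le
      _ ≤ δ := hexp_le
  -- the good event implies the target
  have hsub : μ {ω | B ≤ S ω} ≤
      μ {ω | ∀ t : ℕ, (16 / p) * Real.log (1 / δ) + 4 * B / p ≤ (t : ℝ) →
        B ≤ ∑ s ∈ Finset.Icc 1 t, x s ω} := by
    apply measure_mono_ae
    filter_upwards [hN] with ω hω hωG
    intro t ht
    have ht₀t : t₀ ≤ t := Nat.ceil_le.mpr ht
    have hmono : S ω ≤ ∑ s ∈ Finset.Icc 1 t, x s ω := by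
      rw [hSdef, Finset.sum_apply]
      apply Finset.sum_le_sum_of_subset_of_nonneg
        (Finset.Icc_subset_Icc_right ht₀t)
      intro s _ _
      rcases hω s with h | h <;> simp [h]
    exact le_trans (le_trans hωG hmono) le_rfl
  refine le_trans ?_ hsub
  have hcompl : μ {ω | B ≤ S ω} + μ {ω | B ≤ S ω}ᶜ = 1 := by
    rw [measure_add_measure_compl hGmeas, measure_univ]
  have hcompl_le : μ {ω | B ≤ S ω}ᶜ ≤ ENNReal.ofReal δ := by
    refine le_trans (measure_mono ?_) hbound
    intro ω hω
    simp only [Set.mem_compl_iff, Set.mem_setOf_eq, not_le] at hω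
    exact le_of_lt hω
  calc (1 : ℝ≥0∞) - ENNReal.ofReal δ ≤ 1 - μ {ω | B ≤ S ω}ᶜ :=
        tsub_le_tsub_left hcompl_le 1
    _ ≤ μ {ω | B ≤ S ω} := by
        rw [tsub_le_iff_right]
        rw [← hcompl]
end

section
/- Let λ > 0, θ ∈ ℝ^d, and let x_1, …, x_n ∈ ℝ^d and η_1, …, η_n ∈ ℝ. Set r_τ = x_τᵀ θ + η_τ, S̄ = λ·I + Σ_{τ=1}^{n} x_τ x_τᵀ, and θ̂ = S̄^{−1} · Σ_{τ=1}^{n} r_τ · x_τ. Then: ‖θ̂ − θ‖₂ ≤ ( ‖ Σ_{τ=1}^{n} η_τ x_τ ‖_{S̄^{−1}} + √λ · ‖θ‖₂ ) / √( λ_min(S̄) ). -/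
open Matrix

/-- The Mahalanobis norm `‖v‖_V = √(vᵀ V v)` associated with a matrix `V`. -/
noncomputable def mnorm {d : ℕ} (V : Matrix (Fin d) (Fin d) ℝ) (v : Fin d → ℝ) : ℝ :=
  Real.sqrt (v ⬝ᵥ V *ᵥ v)

/-- The Euclidean (ℓ²) norm of a vector in `ℝ^d`. -/
noncomputable def l2norm {d : ℕ} (v : Fin d → ℝ) : ℝ :=
  Real.sqrt (∑ i, v i ^ 2)

/-- The minimum eigenvalue of a real matrix (defined via its eigenvalues when
the matrix is Hermitian, i.e. symmetric; junk value `0` otherwise). -/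
noncomputable def minEig {d : ℕ} (M : Matrix (Fin d) (Fin d) ℝ) : ℝ :=
  if h : M.IsHermitian then ⨅ i, h.eigenvalues i else 0

section aux

variable {d : ℕ}

lemma mnorm_nonneg (V : Matrix (Fin d) (Fin d) ℝ) (v : Fin d → ℝ) : 0 ≤ mnorm V v :=
  Real.sqrt_nonneg _

lemma l2norm_nonneg (v : Fin d → ℝ) : 0 ≤ l2norm v := Real.sqrt_nonneg _

lemma l2norm_eq_sqrt_dot (v : Fin d → ℝ) : l2norm v = Real.sqrt (v ⬝ᵥ v) := by
  unfold l2norm dotProduct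
  congr 1
  exact Finset.sum_congr rfl fun i _ => sq (v i)

lemma dot_self_nonneg (v : Fin d → ℝ) : 0 ≤ v ⬝ᵥ v :=
  Finset.sum_nonneg fun i _ => mul_self_nonneg _

lemma star_vec_eq (v : Fin d → ℝ) : star v = v :=
  funext fun _ => star_trivial _

lemma psd_dot_nonneg {M : Matrix (Fin d) (Fin d) ℝ} (hM : M.PosSemidef) (v : Fin d → ℝ) :
    0 ≤ v ⬝ᵥ M *ᵥ v := by
  have := hM.dotProduct_mulVec_nonneg v
  rwa [star_vec_eq] at this

lemma sqrt_dot_triangle (p q : Fin d → ℝ) :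
    Real.sqrt ((p + q) ⬝ᵥ (p + q)) ≤ Real.sqrt (p ⬝ᵥ p) + Real.sqrt (q ⬝ᵥ q) := by
  have hcs : p ⬝ᵥ q ≤ Real.sqrt (p ⬝ᵥ p) * Real.sqrt (q ⬝ᵥ q) := by
    have h1 : (p ⬝ᵥ q) ^ 2 ≤ (p ⬝ᵥ p) * (q ⬝ᵥ q) := by
      have := Finset.sum_mul_sq_le_sq_mul_sq Finset.univ p q
      simpa [dotProduct, pow_two] using this
    calc p ⬝ᵥ q ≤ |p ⬝ᵥ q| := le_abs_self _
      _ = Real.sqrt ((p ⬝ᵥ q) ^ 2) := (Real.sqrt_sq_eq_abs _).symm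
      _ ≤ Real.sqrt ((p ⬝ᵥ p) * (q ⬝ᵥ q)) := Real.sqrt_le_sqrt h1
      _ = Real.sqrt (p ⬝ᵥ p) * Real.sqrt (q ⬝ᵥ q) := Real.sqrt_mul (dot_self_nonneg p) _
  have hexp : (p + q) ⬝ᵥ (p + q) = p ⬝ᵥ p + 2 * (p ⬝ᵥ q) + q ⬝ᵥ q := by
    rw [add_dotProduct, dotProduct_add, dotProduct_add, dotProduct_comm q p]; ring
  have hle : (p + q) ⬝ᵥ (p + q) ≤ (Real.sqrt (p ⬝ᵥ p) + Real.sqrt (q ⬝ᵥ q)) ^ 2 := by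
    rw [hexp, add_sq, Real.sq_sqrt (dot_self_nonneg p), Real.sq_sqrt (dot_self_nonneg q)]
    nlinarith [hcs]
  calc Real.sqrt ((p + q) ⬝ᵥ (p + q)) ≤
      Real.sqrt ((Real.sqrt (p ⬝ᵥ p) + Real.sqrt (q ⬝ᵥ q)) ^ 2) := Real.sqrt_le_sqrt hle
    _ = Real.sqrt (p ⬝ᵥ p) + Real.sqrt (q ⬝ᵥ q) := Real.sqrt_sq (by positivity)

lemma sum_mulVec' {n : ℕ} (M : Fin n → Matrix (Fin d) (Fin d) ℝ) (v : Fin d → ℝ) :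
    (∑ τ, M τ) *ᵥ v = ∑ τ, M τ *ᵥ v := by
  ext i
  simp only [mulVec, dotProduct, Finset.sum_apply, Matrix.sum_apply, Finset.sum_mul]
  rw [Finset.sum_comm]

lemma vecMulVec_mulVec' (w v u : Fin d → ℝ) : (vecMulVec w v) *ᵥ u = (v ⬝ᵥ u) • w := by
  ext i
  simp only [mulVec, dotProduct, vecMulVec_apply, Pi.smul_apply, smul_eq_mul, Finset.sum_mul]
  exact Finset.sum_congr rfl fun j _ => by ring

lemma vecMulVec_psd (w : Fin d → ℝ) : (vecMulVec w w).PosSemidef := by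
  have h : vecMulVec w w = (replicateRow Unit w)ᴴ * replicateRow Unit w := by
    rw [conjTranspose_replicateRow, star_vec_eq, ← vecMulVec_eq (ι := Unit)]
  rw [h]
  exact posSemidef_conjTranspose_mul_self _

lemma smul_one_posDef {c : ℝ} (hc : 0 < c) :
    (c • (1 : Matrix (Fin d) (Fin d) ℝ)).PosDef := by
  refine PosDef.of_dotProduct_mulVec_pos ?_ ?_
  · rw [smul_one_eq_diagonal]
    exact isHermitian_diagonal _
  · intro v hv
    rw [smul_mulVec, one_mulVec, dotProduct_smul, star_vec_eq, smul_eq_mul]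
    have h2 : 0 < v ⬝ᵥ v := by
      have := Matrix.dotProduct_star_self_pos_iff (v := v) |>.2 hv
      rwa [star_vec_eq] at this
    exact mul_pos hc h2

/-- Spectral decomposition over ℝ without `RCLike.ofReal` noise. -/
lemma spectral_real {A : Matrix (Fin d) (Fin d) ℝ} (hH : A.IsHermitian) :
    A = (hH.eigenvectorUnitary : Matrix (Fin d) (Fin d) ℝ) * diagonal hH.eigenvalues *
      star (hH.eigenvectorUnitary : Matrix (Fin d) (Fin d) ℝ) := by
  have h := hH.spectral_theorem
  have h2 : (RCLike.ofReal ∘ hH.eigenvalues : Fin d → ℝ) = hH.eigenvalues :=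
    funext fun i => by simp
  rwa [h2] at h

lemma conj_diag_psd {A : Matrix (Fin d) (Fin d) ℝ} (hH : A.IsHermitian)
    (g : Fin d → ℝ) (hg : ∀ i, 0 ≤ g i) :
    ((hH.eigenvectorUnitary : Matrix (Fin d) (Fin d) ℝ) * diagonal g *
      star (hH.eigenvectorUnitary : Matrix (Fin d) (Fin d) ℝ)).PosSemidef := by
  have h := (Matrix.PosSemidef.diagonal (d := g) hg).mul_mul_conjTranspose_same
    (hH.eigenvectorUnitary : Matrix (Fin d) (Fin d) ℝ)
  rwa [← star_eq_conjTranspose] at h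

lemma conj_shift {A : Matrix (Fin d) (Fin d) ℝ} (hH : A.IsHermitian) (c : ℝ) :
    A - c • 1 = (hH.eigenvectorUnitary : Matrix (Fin d) (Fin d) ℝ) *
      diagonal (hH.eigenvalues - fun _ => c) *
      star (hH.eigenvectorUnitary : Matrix (Fin d) (Fin d) ℝ) := by
  set U := (hH.eigenvectorUnitary : Matrix (Fin d) (Fin d) ℝ) with hUdef
  have hU : U * star U = 1 := (Matrix.mem_unitaryGroup_iff).mp hH.eigenvectorUnitary.2
  have h1 : c • (1 : Matrix (Fin d) (Fin d) ℝ) = U * (c • 1) * star U := by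
    rw [mul_smul_comm, mul_one, smul_mul_assoc, hU]
  conv_lhs => rw [spectral_real hH, ← hUdef, h1]
  rw [← Matrix.sub_mul, ← Matrix.mul_sub, smul_one_eq_diagonal, diagonal_sub]
  rfl

lemma shift_psd {A : Matrix (Fin d) (Fin d) ℝ} (hH : A.IsHermitian) {c : ℝ}
    (hc : ∀ i, c ≤ hH.eigenvalues i) : (A - c • 1).PosSemidef := by
  rw [conj_shift hH c]
  exact conj_diag_psd hH _ fun i => sub_nonneg.mpr (hc i)

lemma rayleigh_lower {A : Matrix (Fin d) (Fin d) ℝ} (hH : A.IsHermitian) {c : ℝ}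
    (hc : ∀ i, c ≤ hH.eigenvalues i) (v : Fin d → ℝ) :
    c * (v ⬝ᵥ v) ≤ v ⬝ᵥ A *ᵥ v := by
  have h := psd_dot_nonneg (shift_psd hH hc) v
  rw [sub_mulVec, dotProduct_sub, smul_mulVec, one_mulVec, dotProduct_smul,
    smul_eq_mul] at h
  linarith

lemma eig_ge {A : Matrix (Fin d) (Fin d) ℝ} (hH : A.IsHermitian) {c : ℝ}
    (hpsd : (A - c • 1).PosSemidef) : ∀ i, c ≤ hH.eigenvalues i := by
  intro i
  set v : Fin d → ℝ := (WithLp.equiv 2 _) (hH.eigenvectorBasis i) with hv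
  have hAv : A *ᵥ v = hH.eigenvalues i • v := hH.mulVec_eigenvectorBasis i
  have hvne : v ≠ 0 := by
    intro h
    apply hH.eigenvectorBasis.orthonormal.ne_zero i
    apply (WithLp.equiv 2 (Fin d → ℝ)).injective
    rw [← hv, h]
    simp
  have hvv : 0 < v ⬝ᵥ v := by
    have := Matrix.dotProduct_star_self_pos_iff (v := v) |>.2 hvne
    rwa [star_vec_eq] at this
  have h := psd_dot_nonneg hpsd v
  rw [sub_mulVec, dotProduct_sub, hAv, smul_mulVec, one_mulVec, dotProduct_smul,
    dotProduct_smul, smul_eq_mul, smul_eq_mul] at h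
  nlinarith

lemma inv_eq_conj_diag {A : Matrix (Fin d) (Fin d) ℝ} (hA : A.PosDef) :
    A⁻¹ = (hA.1.eigenvectorUnitary : Matrix (Fin d) (Fin d) ℝ) *
      diagonal (fun i => (hA.1.eigenvalues i)⁻¹) *
      star (hA.1.eigenvectorUnitary : Matrix (Fin d) (Fin d) ℝ) := by
  set U := (hA.1.eigenvectorUnitary : Matrix (Fin d) (Fin d) ℝ) with hUdef
  have hU : U * star U = 1 := (Matrix.mem_unitaryGroup_iff).mp hA.1.eigenvectorUnitary.2
  have hU' : star U * U = 1 := (Matrix.mem_unitaryGroup_iff').mp hA.1.eigenvectorUnitary.2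
  have hdiag : diagonal hA.1.eigenvalues * diagonal (fun i => (hA.1.eigenvalues i)⁻¹) = 1 := by
    rw [diagonal_mul_diagonal]
    have h4 : (fun i => hA.1.eigenvalues i * (hA.1.eigenvalues i)⁻¹) = fun _ : Fin d => (1 : ℝ) :=
      funext fun i => mul_inv_cancel₀ (hA.eigenvalues_pos i).ne'
    rw [h4, diagonal_one]
  have hmain : (U * diagonal hA.1.eigenvalues * star U) *
      (U * diagonal (fun i => (hA.1.eigenvalues i)⁻¹) * star U) = 1 := by
    calc (U * diagonal hA.1.eigenvalues * star U) *
        (U * diagonal (fun i => (hA.1.eigenvalues i)⁻¹) * star U)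
        = U * (diagonal hA.1.eigenvalues * ((star U * U) *
            diagonal (fun i => (hA.1.eigenvalues i)⁻¹))) * star U := by
          noncomm_ring
      _ = 1 := by rw [hU', one_mul, hdiag, mul_one, hU]
  apply inv_eq_right_inv
  rw [← spectral_real hA.1] at hmain
  exact hmain

lemma inv_upper {A : Matrix (Fin d) (Fin d) ℝ} (hA : A.PosDef) {c : ℝ} (hc0 : 0 < c)
    (hc : ∀ i, c ≤ hA.1.eigenvalues i) (v : Fin d → ℝ) :
    v ⬝ᵥ A⁻¹ *ᵥ v ≤ c⁻¹ * (v ⬝ᵥ v) := by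
  set U := (hA.1.eigenvectorUnitary : Matrix (Fin d) (Fin d) ℝ) with hUdef
  have hU : U * star U = 1 := (Matrix.mem_unitaryGroup_iff).mp hA.1.eigenvectorUnitary.2
  have key : (c⁻¹ • (1 : Matrix (Fin d) (Fin d) ℝ) - A⁻¹).PosSemidef := by
    have h1 : c⁻¹ • (1 : Matrix (Fin d) (Fin d) ℝ) = U * (c⁻¹ • 1) * star U := by
      rw [mul_smul_comm, mul_one, smul_mul_assoc, hU]
    rw [h1, inv_eq_conj_diag hA, ← hUdef, ← Matrix.sub_mul, ← Matrix.mul_sub,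
      smul_one_eq_diagonal, diagonal_sub]
    exact conj_diag_psd hA.1 _ fun i => sub_nonneg.mpr (inv_anti₀ hc0 (hc i))
  have h := psd_dot_nonneg key v
  rw [sub_mulVec, dotProduct_sub, smul_mulVec, one_mulVec, dotProduct_smul,
    smul_eq_mul] at h
  linarith

open scoped MatrixOrder in
lemma mnorm_triangle {B : Matrix (Fin d) (Fin d) ℝ} (hB : B.PosSemidef) (a b : Fin d → ℝ) :
    mnorm B (a + b) ≤ mnorm B a + mnorm B b := by
  set C := CFC.sqrt B with hCdef
  have hC : C * C = B := CFC.sqrt_mul_sqrt_self B hB.nonneg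
  have hCh : C.IsHermitian := (CFC.sqrt_nonneg B).posSemidef.1
  have hCt : Cᵀ = C := by
    ext i j
    have h := congrFun (congrFun hCh i) j
    simpa [conjTranspose_apply] using h
  have hvm : ∀ w : Fin d → ℝ, w ᵥ* C = C *ᵥ w := by
    intro w
    rw [← vecMul_transpose C w, hCt]
  have key : ∀ v : Fin d → ℝ, v ⬝ᵥ B *ᵥ v = (C *ᵥ v) ⬝ᵥ (C *ᵥ v) := by
    intro v
    calc v ⬝ᵥ B *ᵥ v = v ⬝ᵥ (C * C) *ᵥ v := by rw [hC]
      _ = v ⬝ᵥ C *ᵥ (C *ᵥ v) := by rw [mulVec_mulVec]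
      _ = (v ᵥ* C) ⬝ᵥ (C *ᵥ v) := dotProduct_mulVec _ _ _
      _ = (C *ᵥ v) ⬝ᵥ (C *ᵥ v) := by rw [hvm]
  unfold mnorm
  rw [key, key, key, mulVec_add]
  exact sqrt_dot_triangle _ _

lemma mnorm_neg (B : Matrix (Fin d) (Fin d) ℝ) (v : Fin d → ℝ) :
    mnorm B (-v) = mnorm B v := by
  unfold mnorm
  rw [mulVec_neg, dotProduct_neg, neg_dotProduct, neg_neg]

end aux

/-- ℓ² error bound for the regularized least-squares estimator:
with `r τ = x τᵀ θ + η τ`, `S̄ = λ • I + ∑ τ, x τ x τᵀ` and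
`θ̂ = S̄⁻¹ (∑ τ, r τ • x τ)`, we have
`‖θ̂ - θ‖₂ ≤ (‖∑ τ, η τ • x τ‖_{S̄⁻¹} + √λ ‖θ‖₂) / √(λ_min S̄)`. -/
theorem stmt_9 (d n : ℕ) (lam : ℝ) (hlam : 0 < lam)
    (θ : Fin d → ℝ) (x : Fin n → Fin d → ℝ) (η r : Fin n → ℝ)
    (hr : ∀ τ, r τ = x τ ⬝ᵥ θ + η τ)
    (Sbar : Matrix (Fin d) (Fin d) ℝ)
    (hS : Sbar = lam • (1 : Matrix (Fin d) (Fin d) ℝ) + ∑ τ, vecMulVec (x τ) (x τ))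
    (θhat : Fin d → ℝ)
    (hθhat : θhat = Sbar⁻¹ *ᵥ (∑ τ, r τ • x τ)) :
    l2norm (θhat - θ) ≤
      (mnorm Sbar⁻¹ (∑ τ, η τ • x τ) + Real.sqrt lam * l2norm θ) /
        Real.sqrt (minEig Sbar) := by
  classical
  have hsum_psd : (∑ τ, vecMulVec (x τ) (x τ)).PosSemidef :=
    Finset.sum_induction _ _ (fun a b ha hb => ha.add hb) Matrix.PosSemidef.zero
      (fun τ _ => vecMulVec_psd (x τ))
  have hSpd : Sbar.PosDef := by
    rw [hS]; exact (smul_one_posDef hlam).add_posSemidef hsum_psd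
  have hH : Sbar.IsHermitian := hSpd.1
  have hshift : Sbar - lam • 1 = ∑ τ, vecMulVec (x τ) (x τ) := by
    rw [hS, add_sub_cancel_left]
  have heig : ∀ i, lam ≤ hH.eigenvalues i :=
    eig_ge hH (by rw [hshift]; exact hsum_psd)
  rcases Nat.eq_zero_or_pos d with hd | hd
  · subst hd
    have h0 : l2norm (θhat - θ) = 0 := by simp [l2norm]
    rw [h0]
    exact div_nonneg (add_nonneg (mnorm_nonneg _ _)
      (mul_nonneg (Real.sqrt_nonneg _) (l2norm_nonneg _))) (Real.sqrt_nonneg _)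
  · haveI : Nonempty (Fin d) := Fin.pos_iff_nonempty.mp hd
    have hceq : minEig Sbar = ⨅ i, hH.eigenvalues i := by
      unfold minEig
      rw [dif_pos hH]
    set c := minEig Sbar with hcdef
    have hlamc : lam ≤ c := by rw [hceq]; exact le_ciInf heig
    have hcpos : 0 < c := lt_of_lt_of_le hlam hlamc
    have hcle : ∀ i, c ≤ hH.eigenvalues i := by
      intro i; rw [hceq]
      exact ciInf_le (Set.Finite.bddBelow (Set.finite_range _)) i
    set a : Fin d → ℝ := ∑ τ, η τ • x τ with hadef
    set u : Fin d → ℝ := a - lam • θ with hudef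
    have hdet : IsUnit Sbar.det := (Matrix.isUnit_iff_isUnit_det _).mp hSpd.isUnit
    have hBpsd : (Sbar⁻¹).PosSemidef := hSpd.posSemidef.inv
    have hsum_r : (∑ τ, r τ • x τ) = Sbar *ᵥ θ + u := by
      have h1 : ∀ τ ∈ Finset.univ, r τ • x τ =
          (vecMulVec (x τ) (x τ)) *ᵥ θ + η τ • x τ := by
        intro τ _
        rw [hr τ, vecMulVec_mulVec', add_smul]
      rw [Finset.sum_congr rfl h1, Finset.sum_add_distrib, ← sum_mulVec', ← hshift, ← hadef,
        sub_mulVec, smul_mulVec, one_mulVec, hudef]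
      abel
    have hW : θhat - θ = Sbar⁻¹ *ᵥ u := by
      rw [hθhat, hsum_r, mulVec_add, mulVec_mulVec, nonsing_inv_mul _ hdet, one_mulVec]
      abel
    set W : Fin d → ℝ := Sbar⁻¹ *ᵥ u with hWdef
    have key1 : c * (W ⬝ᵥ W) ≤ W ⬝ᵥ Sbar *ᵥ W := rayleigh_lower hH hcle W
    have hSW : Sbar *ᵥ W = u := by
      rw [hWdef, mulVec_mulVec, mul_nonsing_inv _ hdet, one_mulVec]
    have key2 : W ⬝ᵥ Sbar *ᵥ W = u ⬝ᵥ Sbar⁻¹ *ᵥ u := by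
      rw [hSW, hWdef, dotProduct_comm]
    have hq0 : 0 ≤ u ⬝ᵥ Sbar⁻¹ *ᵥ u := psd_dot_nonneg hBpsd u
    have hl2W : l2norm W ≤ mnorm Sbar⁻¹ u / Real.sqrt c := by
      rw [l2norm_eq_sqrt_dot]
      have hq : W ⬝ᵥ W ≤ (u ⬝ᵥ Sbar⁻¹ *ᵥ u) / c := by
        rw [le_div_iff₀ hcpos]
        nlinarith [key1, key2]
      calc Real.sqrt (W ⬝ᵥ W) ≤ Real.sqrt ((u ⬝ᵥ Sbar⁻¹ *ᵥ u) / c) := Real.sqrt_le_sqrt hq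
        _ = Real.sqrt (u ⬝ᵥ Sbar⁻¹ *ᵥ u) / Real.sqrt c := Real.sqrt_div' _ hcpos.le
        _ = mnorm Sbar⁻¹ u / Real.sqrt c := rfl
    have htri : mnorm Sbar⁻¹ u ≤ mnorm Sbar⁻¹ a + mnorm Sbar⁻¹ (lam • θ) := by
      have h := mnorm_triangle hBpsd a (-(lam • θ))
      rw [mnorm_neg] at h
      have h2 : a + -(lam • θ) = u := by rw [hudef]; abel
      rwa [h2] at h
    have hlast : mnorm Sbar⁻¹ (lam • θ) ≤ Real.sqrt lam * l2norm θ := by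
      have hθB : θ ⬝ᵥ Sbar⁻¹ *ᵥ θ ≤ lam⁻¹ * (θ ⬝ᵥ θ) := inv_upper hSpd hlam heig θ
      have hquad : (lam • θ) ⬝ᵥ Sbar⁻¹ *ᵥ (lam • θ) = lam * (lam * (θ ⬝ᵥ Sbar⁻¹ *ᵥ θ)) := by
        rw [mulVec_smul, smul_dotProduct, dotProduct_smul, smul_eq_mul, smul_eq_mul]
      have hb : (lam • θ) ⬝ᵥ Sbar⁻¹ *ᵥ (lam • θ) ≤ lam * (θ ⬝ᵥ θ) := by
        rw [hquad]
        have h3 : lam * (θ ⬝ᵥ Sbar⁻¹ *ᵥ θ) ≤ θ ⬝ᵥ θ := by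
          have := mul_le_mul_of_nonneg_left hθB hlam.le
          rwa [← mul_assoc, mul_inv_cancel₀ hlam.ne', one_mul] at this
        nlinarith
      unfold mnorm
      calc Real.sqrt ((lam • θ) ⬝ᵥ Sbar⁻¹ *ᵥ (lam • θ)) ≤ Real.sqrt (lam * (θ ⬝ᵥ θ)) :=
            Real.sqrt_le_sqrt hb
        _ = Real.sqrt lam * Real.sqrt (θ ⬝ᵥ θ) := Real.sqrt_mul hlam.le _
        _ = Real.sqrt lam * l2norm θ := by rw [l2norm_eq_sqrt_dot]
    calc l2norm (θhat - θ) = l2norm W := by rw [hW]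
      _ ≤ mnorm Sbar⁻¹ u / Real.sqrt c := hl2W
      _ ≤ (mnorm Sbar⁻¹ a + Real.sqrt lam * l2norm θ) / Real.sqrt c := by
          have hfin : mnorm Sbar⁻¹ u ≤ mnorm Sbar⁻¹ a + Real.sqrt lam * l2norm θ := by
            linarith
          gcongr
end

section
/- Let λ > 0, λ_x > 0, γ > 0, L > 0, d a positive integer, and δ > 0, u > 0 with δ < u. Assume λ ≤ 2·log(u/δ) + d·log(1 + n·L²/(λ·d)) and u/δ ≥ 256·L²/(γ²·λ·λ_x). If the positive integer n satisfies n ≥ max{ 512·log(u/δ)/(γ²·λ_x), (512·d/(γ²·λ_x))·log(u/δ) }, then ( √( 2·log(u/δ) + d·log(1 + n·L²/(λ·d)) ) + √λ ) / √( λ + n·λ_x/2 ) ≤ γ/4. -/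
set_option maxHeartbeats 1000000

lemma key_exp (z : ℝ) (hz : 0 ≤ z) : 1 + 2*z*Real.exp z ≤ Real.exp (2*z) := by
  have h1 : 1 + z + z^2/2 ≤ Real.exp z := by
    have h := Real.sum_le_exp_of_nonneg hz 3
    simp [Finset.sum_range_succ] at h
    nlinarith [h]
  have h2 : Real.exp (2*z) = Real.exp z * Real.exp z := by
    rw [← Real.exp_add]; ring_nf
  nlinarith [Real.exp_pos z, sq_nonneg (Real.exp z - z), sq_nonneg z, sq_nonneg (z^2)]

/-- Sufficient sample size for a small confidence radius: under the stated
conditions on `λ, λ_x, γ, L, d, δ, u`, if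
`n ≥ max { 512 log(u/δ) / (γ² λ_x), (512 d / (γ² λ_x)) log(u/δ) }`, then
`(√(2 log(u/δ) + d log(1 + n L² / (λ d))) + √λ) / √(λ + n λ_x / 2) ≤ γ/4`. -/
theorem stmt_15 (lam lamx γ L : ℝ) (d : ℕ) (δ u : ℝ)
    (hlam : 0 < lam) (hlamx : 0 < lamx) (hγ : 0 < γ) (hL : 0 < L)
    (hd : 0 < d) (hδ : 0 < δ) (hu : 0 < u) (hδu : δ < u)
    (n : ℕ) (hn : 0 < n)
    (hlam_le : lam ≤ 2 * Real.log (u / δ) +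
      d * Real.log (1 + n * L ^ 2 / (lam * d)))
    (huδ : 256 * L ^ 2 / (γ ^ 2 * lam * lamx) ≤ u / δ)
    (hn_ge : max (512 * Real.log (u / δ) / (γ ^ 2 * lamx))
        ((512 * d / (γ ^ 2 * lamx)) * Real.log (u / δ)) ≤ (n : ℝ)) :
    (Real.sqrt (2 * Real.log (u / δ) +
        d * Real.log (1 + n * L ^ 2 / (lam * d))) + Real.sqrt lam) /
      Real.sqrt (lam + n * lamx / 2) ≤ γ / 4 := by
  have hd1 : (1:ℝ) ≤ (d:ℝ) := by exact_mod_cast hd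
  have hn1 : (1:ℝ) ≤ (n:ℝ) := by exact_mod_cast hn
  have hdpos : (0:ℝ) < d := by linarith
  have hnpos : (0:ℝ) < n := by linarith
  have huδ1 : 1 < u / δ := (one_lt_div hδ).mpr hδu
  have hℓpos : 0 < Real.log (u / δ) := Real.log_pos huδ1
  set ℓ := Real.log (u / δ) with hℓdef
  set s : ℝ := γ^2 * lamx / 256 with hsdef
  have hspos : 0 < s := by positivity
  -- n ≥ 2 d ℓ / s
  have hn2 : 2 * d * ℓ ≤ (n:ℝ) * s := by
    have h := le_trans (le_max_right _ _) hn_ge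
    rw [hsdef]
    have : (512 * d / (γ ^ 2 * lamx)) * ℓ = 2 * d * ℓ / (γ^2 * lamx / 256) := by
      field_simp; ring
    rw [this, div_le_iff₀ (by positivity)] at h
    linarith
  set y : ℝ := s * n / d with hydef
  have hypos : 0 < y := by positivity
  have hy2ℓ : 2 * ℓ ≤ y := by
    rw [hydef, le_div_iff₀ hdpos]
    nlinarith
  have hC : L^2 / (s * lam) ≤ u / δ := by
    rw [hsdef]
    calc L^2 / (γ^2 * lamx / 256 * lam) = 256 * L ^ 2 / (γ ^ 2 * lam * lamx) := by
          field_simp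
      _ ≤ u / δ := huδ
  have harg : (n:ℝ) * L ^ 2 / (lam * d) = y * (L^2 / (s * lam)) := by
    rw [hydef]; field_simp
  have hexp : Real.exp ℓ = u / δ := Real.exp_log (by positivity)
  have hlog : Real.log (1 + n * L ^ 2 / (lam * d)) ≤ y := by
    rw [Real.log_le_iff_le_exp (by positivity)]
    have h1 : 1 + (n:ℝ) * L ^ 2 / (lam * d) ≤ 1 + y * Real.exp (y/2) := by
      rw [harg]
      have hℓy : Real.exp ℓ ≤ Real.exp (y/2) := Real.exp_le_exp.mpr (by linarith)
      have : L^2/(s*lam) ≤ Real.exp (y/2) := by rw [hexp] at hℓy; linarith [hC]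
      nlinarith [hypos.le]
    have h2 := key_exp (y/2) (by linarith)
    rw [show 2*(y/2) = y by ring] at h2
    linarith
  -- total bound: explicit, no let-vars
  have h1 : (d:ℝ) * Real.log (1 + n * L ^ 2 / (lam * d)) ≤ γ^2 * lamx * n / 256 := by
    have hdy : (d:ℝ) * y = γ^2 * lamx * n / 256 := by
      rw [hydef, hsdef]; field_simp
    calc (d:ℝ) * Real.log (1 + n * L ^ 2 / (lam * d)) ≤ (d:ℝ) * y :=
          mul_le_mul_of_nonneg_left hlog hdpos.le
      _ = γ^2 * lamx * n / 256 := hdy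
  have h2 : 2 * ℓ ≤ γ^2 * lamx * n / 256 := by
    rw [hsdef] at hn2
    have hdℓ : 0 ≤ ((d:ℝ) - 1) * ℓ := mul_nonneg (by linarith) hℓpos.le
    nlinarith [hn2]
  have hA_le : 2 * ℓ + d * Real.log (1 + n * L ^ 2 / (lam * d))
      ≤ γ^2 * lamx * n / 128 := by linarith
  have hApos : 0 < 2 * ℓ + d * Real.log (1 + n * L ^ 2 / (lam * d)) :=
    lt_of_lt_of_le hlam hlam_le
  -- final square-root arithmetic
  have hnum : Real.sqrt (2 * ℓ + d * Real.log (1 + n * L ^ 2 / (lam * d)))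
      + Real.sqrt lam ≤ 2 * Real.sqrt (2 * ℓ + d * Real.log (1 + n * L ^ 2 / (lam * d))) := by
    have := Real.sqrt_le_sqrt hlam_le
    linarith
  have hden0 : (0:ℝ) < Real.sqrt (n * lamx / 2) := Real.sqrt_pos.mpr (by positivity)
  have hden : Real.sqrt (n * lamx / 2) ≤ Real.sqrt (lam + n * lamx / 2) :=
    Real.sqrt_le_sqrt (by linarith)
  calc (Real.sqrt (2 * ℓ + d * Real.log (1 + n * L ^ 2 / (lam * d))) + Real.sqrt lam)
        / Real.sqrt (lam + n * lamx / 2)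
      ≤ (2 * Real.sqrt (2 * ℓ + d * Real.log (1 + n * L ^ 2 / (lam * d))))
        / Real.sqrt (n * lamx / 2) :=
        div_le_div₀ (by positivity) hnum hden0 hden
    _ ≤ γ / 4 := by
        rw [div_le_iff₀ hden0]
        have e1 : 2 * Real.sqrt (2 * ℓ + d * Real.log (1 + n * L ^ 2 / (lam * d)))
            = Real.sqrt (4 * (2 * ℓ + d * Real.log (1 + n * L ^ 2 / (lam * d)))) := by
          rw [show (4:ℝ) * (2 * ℓ + d * Real.log (1 + n * L ^ 2 / (lam * d)))
              = 2^2 * (2 * ℓ + d * Real.log (1 + n * L ^ 2 / (lam * d))) by ring,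
            Real.sqrt_mul (by positivity), Real.sqrt_sq (by norm_num)]
        have e2 : γ / 4 * Real.sqrt (n * lamx / 2)
            = Real.sqrt ((γ/4)^2 * (n * lamx / 2)) := by
          rw [Real.sqrt_mul (by positivity), Real.sqrt_sq (by positivity)]
        rw [e1, e2]
        apply Real.sqrt_le_sqrt
        nlinarith [hA_le]
end
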